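/- Let c be a 3-edge-coloring of the complete graph on a k-element vertex set A and h a 3-edge-coloring of the complete graph on an m-element vertex set B. Define the blow-up coloring G on the vertex set A × B by: the color of the edge {(a,b),(a',b')} is c({a,a'}) if a ≠ a', and h({b,b'}) if a = a' (and b ≠ b'). Then the number of rainbow triangles of G equals m^3·F(c) + k·F(h), where F(c) and F(h) denote the numbers of rainbow triangles in c and h respectively. -/

import Mathlib

/-- A triangle (3-element vertex set) is rainbow: its three edges get pairwise distinct colors. -/
def IsRainbow {V : Type*} [DecidableEq V] (G : Sym2 V → Fin 3) (T : Finset V) : Prop :=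
  ∃ u v w : V, T = {u, v, w} ∧ u ≠ v ∧ u ≠ w ∧ v ≠ w ∧
    G s(u, v) ≠ G s(u, w) ∧ G s(u, v) ≠ G s(v, w) ∧ G s(u, w) ≠ G s(v, w)

/-- The number of rainbow triangles of a 3-edge-coloring. -/
noncomputable def rbCount {V : Type*} [DecidableEq V] (G : Sym2 V → Fin 3) : ℕ :=
  Nat.card {T : Finset V // IsRainbow G T}

/-- `maxRb n` is `F(n)`: the maximum number of rainbow triangles over all
3-edge-colorings of the complete graph on `n` vertices. -/
noncomputable def maxRb (n : ℕ) : ℕ :=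
  Finset.univ.sup fun G : Sym2 (Fin n) → Fin 3 => rbCount G


def ORb {V : Type*} [DecidableEq V] (G : Sym2 V → Fin 3) (t : V × V × V) : Prop :=
  t.1 ≠ t.2.1 ∧ t.1 ≠ t.2.2 ∧ t.2.1 ≠ t.2.2 ∧
  G s(t.1, t.2.1) ≠ G s(t.1, t.2.2) ∧ G s(t.1, t.2.1) ≠ G s(t.2.1, t.2.2) ∧
  G s(t.1, t.2.2) ≠ G s(t.2.1, t.2.2)

instance {V : Type*} [DecidableEq V] (G : Sym2 V → Fin 3) : DecidablePred (ORb G) :=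
  fun t => by unfold ORb; infer_instance

instance {V : Type*} [DecidableEq V] [Fintype V] (G : Sym2 V → Fin 3) :
    DecidablePred (IsRainbow G) :=
  fun T => by unfold IsRainbow; infer_instance

lemma rbCount_eq {V : Type*} [DecidableEq V] [Fintype V] (G : Sym2 V → Fin 3) :
    rbCount G = (Finset.univ.filter (IsRainbow G)).card := by
  rw [rbCount, Nat.card_eq_fintype_card, Fintype.card_subtype]

lemma orb_swap12 {V : Type*} [DecidableEq V] (G : Sym2 V → Fin 3) {u v w : V}
    (h : ORb G (u, v, w)) : ORb G (v, u, w) := by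
  obtain ⟨h1, h2, h3, h4, h5, h6⟩ := h
  refine ⟨h1.symm, h3, h2, ?_, ?_, ?_⟩ <;>
    simp only [show s(v,u) = s(u,v) from Sym2.eq_swap]
  · exact h5
  · exact h4
  · exact h6.symm

lemma orb_swap23 {V : Type*} [DecidableEq V] (G : Sym2 V → Fin 3) {u v w : V}
    (h : ORb G (u, v, w)) : ORb G (u, w, v) := by
  obtain ⟨h1, h2, h3, h4, h5, h6⟩ := h
  refine ⟨h2, h1, h3.symm, ?_, ?_, ?_⟩ <;>
    simp only [show s(w,v) = s(v,w) from Sym2.eq_swap]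
  · exact h4.symm
  · exact h6
  · exact h5

lemma orb_of_set_eq {V : Type*} [DecidableEq V] (G : Sym2 V → Fin 3) {u v w x y z : V}
    (h : ORb G (u, v, w)) (hxy : x ≠ y) (hxz : x ≠ z) (hyz : y ≠ z)
    (hset : ({x, y, z} : Finset V) = {u, v, w}) : ORb G (x, y, z) := by
  have hx : x = u ∨ x = v ∨ x = w := by
    have : x ∈ ({u, v, w} : Finset V) := hset ▸ (by simp)
    simpa using this
  have hy : y = u ∨ y = v ∨ y = w := by
    have : y ∈ ({u, v, w} : Finset V) := hset ▸ (by simp)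
    simpa using this
  have hz : z = u ∨ z = v ∨ z = w := by
    have : z ∈ ({u, v, w} : Finset V) := hset ▸ (by simp)
    simpa using this
  rcases hx with rfl | rfl | rfl <;> rcases hy with rfl | rfl | rfl <;>
    rcases hz with rfl | rfl | rfl <;>
    first
      | exact absurd rfl hxy
      | exact absurd rfl hxz
      | exact absurd rfl hyz
      | exact h
      | exact orb_swap12 G h
      | exact orb_swap23 G h
      | exact orb_swap23 G (orb_swap12 G h)
      | exact orb_swap12 G (orb_swap23 G h)
      | exact orb_swap23 G (orb_swap12 G (orb_swap23 G h))

lemma orb_card {V : Type*} [DecidableEq V] [Fintype V] (G : Sym2 V → Fin 3) :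
    (Finset.univ.filter (fun t : V × V × V => ORb G t)).card = 6 * rbCount G := by
  rw [rbCount_eq]
  rw [Finset.card_eq_sum_card_fiberwise
    (f := fun t : V × V × V => ({t.1, t.2.1, t.2.2} : Finset V))
    (t := Finset.univ.filter (IsRainbow G))
    (fun t ht => by
      simp only [Finset.mem_coe, Finset.mem_filter, Finset.mem_univ, true_and] at ht ⊢
      exact ⟨t.1, t.2.1, t.2.2, rfl, ht.1, ht.2.1, ht.2.2.1, ht.2.2.2.1,
        ht.2.2.2.2.1, ht.2.2.2.2.2⟩)]
  have step : ∀ T ∈ Finset.univ.filter (IsRainbow G),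
      ((Finset.univ.filter (fun t : V × V × V => ORb G t)).filter
        (fun t => ({t.1, t.2.1, t.2.2} : Finset V) = T)).card = 6 := by
    intro T hT
    simp only [Finset.mem_filter, Finset.mem_univ, true_and] at hT
    obtain ⟨u, v, w, rfl, huv, huw, hvw, q1, q2, q3⟩ := hT
    have horb : ORb G (u, v, w) := ⟨huv, huw, hvw, q1, q2, q3⟩
    have hE : (Finset.univ.filter (fun t : V × V × V => ORb G t)).filter
        (fun t => ({t.1, t.2.1, t.2.2} : Finset V) = {u, v, w}) =
        ({(u,v,w), (u,w,v), (v,u,w), (v,w,u), (w,u,v), (w,v,u)} :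
          Finset (V × V × V)) := by
      ext t
      obtain ⟨t1, t2, t3⟩ := t
      simp only [Finset.mem_filter, Finset.mem_univ, true_and, Finset.mem_insert,
        Finset.mem_singleton]
      constructor
      · rintro ⟨ho, hs⟩
        obtain ⟨d1, d2, d3, -⟩ := ho
        have h1 : t1 = u ∨ t1 = v ∨ t1 = w := by
          have : t1 ∈ ({u, v, w} : Finset V) := hs ▸ (by simp)
          simpa using this
        have h2 : t2 = u ∨ t2 = v ∨ t2 = w := by
          have : t2 ∈ ({u, v, w} : Finset V) := hs ▸ (by simp)
          simpa using this
        have h3 : t3 = u ∨ t3 = v ∨ t3 = w := by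
          have : t3 ∈ ({u, v, w} : Finset V) := hs ▸ (by simp)
          simpa using this
        rcases h1 with rfl | rfl | rfl <;> rcases h2 with rfl | rfl | rfl <;>
          rcases h3 with rfl | rfl | rfl <;> simp_all
      · intro hmem
        rcases hmem with h' | h' | h' | h' | h' | h' <;>
          (injection h' with e1 e2; injection e2 with e2 e3;
            subst e1; subst e2; subst e3) <;>
          refine ⟨?_, ?_⟩
        · exact horb
        · rfl
        · exact orb_swap23 G horb
        · ext a; simp; tauto
        · exact orb_swap12 G horb
        · ext a; simp; tauto
        · exact orb_swap23 G (orb_swap12 G horb)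
        · ext a; simp; tauto
        · exact orb_swap12 G (orb_swap23 G horb)
        · ext a; simp; tauto
        · exact orb_swap23 G (orb_swap12 G (orb_swap23 G horb))
        · ext a; simp; tauto
    rw [hE]
    repeat rw [Finset.card_insert_of_not_mem (by simp [Prod.ext_iff]; tauto)]
    simp [Finset.card_insert_of_notMem, Prod.ext_iff, huv, huw, hvw, huv.symm, huw.symm, hvw.symm]
  rw [Finset.sum_congr rfl step, Finset.sum_const, smul_eq_mul, mul_comm]

theorem stmt14 (k m : ℕ)
    (c : Sym2 (Fin k) → Fin 3) (h : Sym2 (Fin m) → Fin 3)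
    (G : Sym2 (Fin k × Fin m) → Fin 3)
    (hG : ∀ p q : Fin k × Fin m, p ≠ q →
      G s(p, q) = if p.1 = q.1 then h s(p.2, q.2) else c s(p.1, q.1)) :
    rbCount G = m ^ 3 * rbCount c + k * rbCount h := by
  classical
  have hGsame : ∀ p q : Fin k × Fin m, p ≠ q → p.1 = q.1 → G s(p, q) = h s(p.2, q.2) := by
    intro p q hpq he; rw [hG p q hpq, if_pos he]
  have hGdiff : ∀ p q : Fin k × Fin m, p.1 ≠ q.1 → G s(p, q) = c s(p.1, q.1) := by
    intro p q he
    rw [hG p q (fun hh => he (by rw [hh])), if_neg he]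
  have firsts : ∀ t : (Fin k × Fin m) × (Fin k × Fin m) × (Fin k × Fin m), ORb G t →
      (t.1.1 = t.2.1.1 ∧ t.1.1 = t.2.2.1) ∨
      (t.1.1 ≠ t.2.1.1 ∧ t.1.1 ≠ t.2.2.1 ∧ t.2.1.1 ≠ t.2.2.1) := by
    rintro ⟨p1, p2, p3⟩ ⟨d1, d2, d3, q1, q2, q3⟩
    by_cases e12 : p1.1 = p2.1 <;> by_cases e13 : p1.1 = p3.1
    · exact Or.inl ⟨e12, e13⟩
    · exfalso
      apply q3
      rw [hGdiff p1 p3 e13, hGdiff p2 p3 (by rw [← e12]; exact e13), ← e12]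
    · exfalso
      apply q2
      have e32 : p3.1 ≠ p2.1 := by rw [← e13]; exact e12
      rw [hGdiff p1 p2 e12, show s(p2,p3) = s(p3,p2) from Sym2.eq_swap,
        hGdiff p3 p2 e32, ← e13]
    · by_cases e23 : p2.1 = p3.1
      · exfalso
        apply q1
        rw [hGdiff p1 p2 e12, hGdiff p1 p3 e13, e23]
      · exact Or.inr ⟨e12, e13, e23⟩
  set P : (Fin k × Fin m) × (Fin k × Fin m) × (Fin k × Fin m) → Prop :=
    fun t => t.1.1 = t.2.1.1 ∧ t.1.1 = t.2.2.1 with hP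
  have hsplit := Finset.card_filter_add_card_filter_not
    (s := Finset.univ.filter (fun t : (Fin k × Fin m) × (Fin k × Fin m) × (Fin k × Fin m)
      => ORb G t)) (p := P)
  -- Part A : same first coordinate
  have partA : ((Finset.univ.filter (fun t : (Fin k × Fin m) × (Fin k × Fin m) ×
      (Fin k × Fin m) => ORb G t)).filter P).card
      = k * (Finset.univ.filter (fun s : Fin m × Fin m × Fin m => ORb h s)).card := by
    have hcard : ((Finset.univ : Finset (Fin k)) ×ˢ
        Finset.univ.filter (fun s : Fin m × Fin m × Fin m => ORb h s)).card
        = k * (Finset.univ.filter (fun s : Fin m × Fin m × Fin m => ORb h s)).card := by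
      rw [Finset.card_product, Finset.card_fin]
    rw [← hcard]
    refine Finset.card_bij'
      (fun t _ => (t.1.1, (t.1.2, t.2.1.2, t.2.2.2)))
      (fun x _ => ((x.1, x.2.1), (x.1, x.2.2.1), (x.1, x.2.2.2))) ?_ ?_ ?_ ?_
    · rintro ⟨p1, p2, p3⟩ ht
      simp only [Finset.mem_filter, Finset.mem_univ, true_and] at ht
      obtain ⟨⟨d1, d2, d3, q1, q2, q3⟩, e12, e13⟩ := ht
      simp only [Finset.mem_product, Finset.mem_univ, true_and, Finset.mem_filter]
      have b12 : p1.2 ≠ p2.2 := fun hb => d1 (Prod.ext e12 hb)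
      have b13 : p1.2 ≠ p3.2 := fun hb => d2 (Prod.ext e13 hb)
      have b23 : p2.2 ≠ p3.2 := fun hb => d3 (Prod.ext (e12 ▸ e13) hb)
      have c12 := hGsame p1 p2 d1 e12
      have c13 := hGsame p1 p3 d2 e13
      have c23 := hGsame p2 p3 d3 (e12 ▸ e13)
      refine ⟨b12, b13, b23, ?_, ?_, ?_⟩
      · rw [← c12, ← c13]; exact q1
      · rw [← c12, ← c23]; exact q2
      · rw [← c13, ← c23]; exact q3
    · rintro ⟨a, b1, b2, b3⟩ hx
      simp only [Finset.mem_product, Finset.mem_univ, true_and, Finset.mem_filter] at hx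
      obtain ⟨b12, b13, b23, q1, q2, q3⟩ := hx
      have d1 : (a, b1) ≠ (a, b2) := fun hh => b12 (congrArg Prod.snd hh)
      have d2 : (a, b1) ≠ (a, b3) := fun hh => b13 (congrArg Prod.snd hh)
      have d3 : (a, b2) ≠ (a, b3) := fun hh => b23 (congrArg Prod.snd hh)
      have c12 := hGsame (a, b1) (a, b2) d1 rfl
      have c13 := hGsame (a, b1) (a, b3) d2 rfl
      have c23 := hGsame (a, b2) (a, b3) d3 rfl
      simp only [Finset.mem_filter, Finset.mem_univ, true_and]
      exact ⟨⟨d1, d2, d3, by rw [c12, c13]; exact q1, by rw [c12, c23]; exact q2,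
        by rw [c13, c23]; exact q3⟩, rfl, rfl⟩
    · rintro ⟨p1, p2, p3⟩ ht
      simp only [Finset.mem_filter, Finset.mem_univ, true_and] at ht
      obtain ⟨-, e12, e13⟩ := ht
      simp only at e12 e13
      exact Prod.ext rfl (Prod.ext (Prod.ext e12 rfl) (Prod.ext e13 rfl))
    · rintro ⟨a, b1, b2, b3⟩ _
      rfl
  have partB : ((Finset.univ.filter (fun t : (Fin k × Fin m) × (Fin k × Fin m) ×
      (Fin k × Fin m) => ORb G t)).filter (fun t => ¬ P t)).card
      = (Finset.univ.filter (fun s : Fin k × Fin k × Fin k => ORb c s)).card * m ^ 3 := by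
    have hcard : ((Finset.univ.filter (fun s : Fin k × Fin k × Fin k => ORb c s)) ×ˢ
        (Finset.univ : Finset (Fin m × Fin m × Fin m))).card
        = (Finset.univ.filter (fun s : Fin k × Fin k × Fin k => ORb c s)).card * m ^ 3 := by
      rw [Finset.card_product, Finset.card_univ]
      simp [pow_succ, mul_assoc]
    rw [← hcard]
    refine Finset.card_bij'
      (fun t _ => ((t.1.1, t.2.1.1, t.2.2.1), (t.1.2, t.2.1.2, t.2.2.2)))
      (fun x _ => ((x.1.1, x.2.1), (x.1.2.1, x.2.2.1), (x.1.2.2, x.2.2.2))) ?_ ?_ ?_ ?_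
    · rintro ⟨p1, p2, p3⟩ ht
      simp only [Finset.mem_filter, Finset.mem_univ, true_and] at ht
      obtain ⟨ho, hnp⟩ := ht
      have hd : p1.1 ≠ p2.1 ∧ p1.1 ≠ p3.1 ∧ p2.1 ≠ p3.1 := by
        rcases firsts _ ho with hcase | hcase
        · exact absurd hcase hnp
        · exact hcase
      obtain ⟨a12, a13, a23⟩ := hd
      obtain ⟨d1, d2, d3, q1, q2, q3⟩ := ho
      simp only [Finset.mem_product, Finset.mem_univ, and_true, Finset.mem_filter,
        true_and]
      have c12 := hGdiff p1 p2 a12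
      have c13 := hGdiff p1 p3 a13
      have c23 := hGdiff p2 p3 a23
      refine ⟨a12, a13, a23, ?_, ?_, ?_⟩
      · rw [← c12, ← c13]; exact q1
      · rw [← c12, ← c23]; exact q2
      · rw [← c13, ← c23]; exact q3
    · rintro ⟨⟨a1, a2, a3⟩, b1, b2, b3⟩ hx
      simp only [Finset.mem_product, Finset.mem_univ, and_true, Finset.mem_filter,
        true_and] at hx
      obtain ⟨a12, a13, a23, q1, q2, q3⟩ := hx
      have d1 : ((a1, b1) : Fin k × Fin m) ≠ (a2, b2) :=
        fun hh => a12 (congrArg Prod.fst hh)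
      have d2 : ((a1, b1) : Fin k × Fin m) ≠ (a3, b3) :=
        fun hh => a13 (congrArg Prod.fst hh)
      have d3 : ((a2, b2) : Fin k × Fin m) ≠ (a3, b3) :=
        fun hh => a23 (congrArg Prod.fst hh)
      have c12 := hGdiff (a1, b1) (a2, b2) a12
      have c13 := hGdiff (a1, b1) (a3, b3) a13
      have c23 := hGdiff (a2, b2) (a3, b3) a23
      simp only [Finset.mem_filter, Finset.mem_univ, true_and]
      refine ⟨⟨d1, d2, d3, by rw [c12, c13]; exact q1, by rw [c12, c23]; exact q2,
        by rw [c13, c23]; exact q3⟩, ?_⟩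
      simp only [hP]
      rintro ⟨hh, -⟩
      exact a12 hh
    · rintro ⟨p1, p2, p3⟩ _
      rfl
    · rintro ⟨⟨a1, a2, a3⟩, b1, b2, b3⟩ _
      rfl
  have h6G := orb_card G
  have h6c := orb_card c
  have h6h := orb_card h
  have key : 6 * rbCount G = 6 * (m ^ 3 * rbCount c + k * rbCount h) := by
    rw [← h6G, ← hsplit, partA, partB, h6c, h6h]
    ring
  exact Nat.eq_of_mul_eq_mul_left (by norm_num) key
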